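/- Let Q be a field and φ : Q → Q a ring endomorphism with fixed field F = {a ∈ Q : φ(a) = a}. Extend φ to a ring endomorphism φ̂ of the rational function field Q(X) acting coefficientwise on polynomials and fixing X. Let n ≥ 1, let Δ be an invertible n × n matrix with entries in Q, and let x ∈ Q(X)^n satisfy x = Δ · φ̂(x), where φ̂ is applied entrywise. Then denom(x) has all its coefficients in F, and consequently every entry of x lies in the Q-subalgebra of Q(X) generated by the subfield F(X). -/

import Mathlib

/-- **Solutions of `x = Δ · φ̂(x)` have denominators with coefficients in the fixed field.**
Let `Q` be a field, `φ : Q → Q` a ring endomorphism with fixed field `F`, and `φ̂` its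
extension to `Q(X)` fixing `X` (acting coefficientwise on polynomials).  If `Δ` is an
invertible `n × n` matrix over `Q` and `x ∈ Q(X)^n` satisfies `x = Δ · φ̂(x)`, then the
(monic) least common denominator of `x` has all its coefficients in `F`, and every entry of
`x` lies in the `Q`-subalgebra of `Q(X)` generated by the subfield `F(X)`. -/
theorem stmt10 {Q : Type*} [Field Q] [DecidableEq Q] (φ : Q →+* Q)
    (n : ℕ) (hn : 1 ≤ n)
    (Δ : Matrix (Fin n) (Fin n) Q) (hΔ : IsUnit Δ.det)
    (x : Fin n → RatFunc Q)
    (hx : ∀ i : Fin n, x i = ∑ j : Fin n, RatFunc.C (Δ i j) *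
      RatFunc.mapRingHom (Polynomial.mapRingHom φ)
        (fun g hg => by
          simpa only [Submonoid.mem_comap, Polynomial.coe_mapRingHom,
            mem_nonZeroDivisors_iff_ne_zero] using
            (Polynomial.map_ne_zero_iff φ.injective).mpr
              (mem_nonZeroDivisors_iff_ne_zero.mp hg))
        (x j)) :
    (∀ k : ℕ, φ ((Finset.univ.lcm (fun j : Fin n => (x j).denom)).coeff k) =
        (Finset.univ.lcm (fun j : Fin n => (x j).denom)).coeff k) ∧
    ∀ i : Fin n, x i ∈ Algebra.adjoin Q
      {f : RatFunc Q | ∃ a b : Polynomial Q,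
        (∀ k : ℕ, φ (a.coeff k) = a.coeff k) ∧
        (∀ k : ℕ, φ (b.coeff k) = b.coeff k) ∧ b ≠ 0 ∧
        f = algebraMap (Polynomial Q) (RatFunc Q) a /
            algebraMap (Polynomial Q) (RatFunc Q) b} := by
  set D : Polynomial Q := Finset.univ.lcm (fun j : Fin n => (x j).denom) with hDdef
  have hφinj : Function.Injective φ := φ.injective
  have hD0 : D ≠ 0 := by
    rw [hDdef, Ne, Finset.lcm_eq_zero_iff]
    rintro ⟨j, -, hj⟩
    exact RatFunc.denom_ne_zero (x j) (by simpa using hj)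
  have hDmonic : D.Monic := by
    have := Finset.normalize_lcm (s := (Finset.univ : Finset (Fin n)))
      (f := fun j : Fin n => (x j).denom)
    rw [← hDdef] at this
    rw [← this]
    exact Polynomial.monic_normalize hD0
  have hDφmonic : (D.map φ).Monic := hDmonic.map φ
  have hDφ0 : D.map φ ≠ 0 := hDφmonic.ne_zero
  -- each denom (x i) divides D.map φ
  have hdvd : ∀ i : Fin n, (x i).denom ∣ D.map φ := by
    intro i
    rw [RatFunc.denom_dvd hDφ0]
    -- find p with x i = algebraMap p / algebraMap (D.map φ)
    have key : ∀ j : Fin n, ∃ p : Polynomial Q,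
        RatFunc.C (Δ i j) * RatFunc.mapRingHom (Polynomial.mapRingHom φ)
          (fun g hg => by
            simpa only [Submonoid.mem_comap, Polynomial.coe_mapRingHom,
              mem_nonZeroDivisors_iff_ne_zero] using
              (Polynomial.map_ne_zero_iff φ.injective).mpr
                (mem_nonZeroDivisors_iff_ne_zero.mp hg))
          (x j)
        = algebraMap (Polynomial Q) (RatFunc Q) p /
            algebraMap (Polynomial Q) (RatFunc Q) (D.map φ) := by
      intro j
      obtain ⟨c, hc⟩ : (x j).denom ∣ D := Finset.dvd_lcm (Finset.mem_univ j)
      refine ⟨Polynomial.C (Δ i j) * ((x j).num.map φ * c.map φ), ?_⟩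
      have hc0 : c ≠ 0 := by rintro rfl; rw [mul_zero] at hc; exact hD0 hc
      have hcφ0 : algebraMap (Polynomial Q) (RatFunc Q) (c.map φ) ≠ 0 :=
        RatFunc.algebraMap_ne_zero ((Polynomial.map_ne_zero_iff hφinj).mpr hc0)
      have hdφ0 : algebraMap (Polynomial Q) (RatFunc Q) ((x j).denom.map φ) ≠ 0 :=
        RatFunc.algebraMap_ne_zero ((Polynomial.map_ne_zero_iff hφinj).mpr
          (RatFunc.denom_ne_zero (x j)))
      conv_lhs => rw [← RatFunc.num_div_denom (x j)]
      rw [RatFunc.coe_mapRingHom_eq_coe_map, RatFunc.map_apply_div]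
      rw [map_mul, map_mul, ← RatFunc.algebraMap_C (Δ i j), hc, Polynomial.map_mul, map_mul]
      field_simp
      simp only [Polynomial.coe_mapRingHom]
      exact mul_div_cancel_right₀ _ hdφ0
    choose p hp using key
    refine ⟨∑ j : Fin n, p j, ?_⟩
    rw [hx i, map_sum, Finset.sum_div]
    exact Finset.sum_congr rfl fun j _ => hp j
  -- hence D divides D.map φ and they are equal
  have hDdvd : D ∣ D.map φ := by
    rw [hDdef]
    exact Finset.lcm_dvd fun j _ => hdvd j
  have hDeq : D.map φ = D := by
    obtain ⟨u, hu⟩ := hDdvd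
    have hu0 : u ≠ 0 := by rintro rfl; rw [mul_zero] at hu; exact hDφ0 hu
    have hdeg : (Polynomial.map φ D).natDegree = D.natDegree := Polynomial.natDegree_map φ
    rw [hu, Polynomial.natDegree_mul hD0 hu0] at hdeg
    have hudeg : u.natDegree = 0 := by omega
    have humonic : u.Monic := by
      have := hDφmonic
      rw [hu] at this
      unfold Polynomial.Monic at this ⊢
      rwa [Polynomial.leadingCoeff_mul, hDmonic.leadingCoeff, one_mul] at this
    rw [hu, Polynomial.eq_one_of_monic_natDegree_zero humonic hudeg, mul_one]
  have hfix : ∀ k : ℕ, φ (D.coeff k) = D.coeff k := by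
    intro k
    conv_rhs => rw [← hDeq]
    rw [Polynomial.coeff_map]
  refine ⟨hfix, ?_⟩
  -- second part
  set S : Set (RatFunc Q) :=
      {f : RatFunc Q | ∃ a b : Polynomial Q,
        (∀ k : ℕ, φ (a.coeff k) = a.coeff k) ∧
        (∀ k : ℕ, φ (b.coeff k) = b.coeff k) ∧ b ≠ 0 ∧
        f = algebraMap (Polynomial Q) (RatFunc Q) a /
            algebraMap (Polynomial Q) (RatFunc Q) b} with hSdef
  have hXfix : ∀ k : ℕ, φ ((Polynomial.X : Polynomial Q).coeff k) = (Polynomial.X : Polynomial Q).coeff k := by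
    intro k; rw [Polynomial.coeff_X]; split_ifs <;> simp
  have honefix : ∀ k : ℕ, φ ((1 : Polynomial Q).coeff k) = (1 : Polynomial Q).coeff k := by
    intro k; rw [Polynomial.coeff_one]; split_ifs <;> simp
  have hXmem : (RatFunc.X : RatFunc Q) ∈ S := by
    refine ⟨Polynomial.X, 1, hXfix, honefix, one_ne_zero, ?_⟩
    rw [map_one, div_one, RatFunc.algebraMap_X]
  have hinvD : (1 : RatFunc Q) / algebraMap (Polynomial Q) (RatFunc Q) D ∈ S := by
    refine ⟨1, D, honefix, hfix, hD0, ?_⟩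
    rw [map_one]
  have halg : ∀ p : Polynomial Q,
      algebraMap (Polynomial Q) (RatFunc Q) p ∈ Algebra.adjoin Q S := by
    intro p
    induction p using Polynomial.induction_on' with
    | add f g hf hg => rw [map_add]; exact add_mem hf hg
    | monomial m a =>
      rw [← Polynomial.C_mul_X_pow_eq_monomial, map_mul, map_pow, RatFunc.algebraMap_C,
        RatFunc.algebraMap_X, ← RatFunc.algebraMap_eq_C]
      exact mul_mem (Subalgebra.algebraMap_mem _ a)
        (pow_mem (Algebra.subset_adjoin hXmem) m)
  intro i
  obtain ⟨c, hc⟩ : (x i).denom ∣ D := Finset.dvd_lcm (Finset.mem_univ i)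
  have hc0 : c ≠ 0 := by rintro rfl; rw [mul_zero] at hc; exact hD0 hc
  have hcφ0 : algebraMap (Polynomial Q) (RatFunc Q) c ≠ 0 :=
    RatFunc.algebraMap_ne_zero hc0
  have hd0 : algebraMap (Polynomial Q) (RatFunc Q) (x i).denom ≠ 0 :=
    RatFunc.algebraMap_ne_zero (RatFunc.denom_ne_zero (x i))
  have hxn : x i * algebraMap (Polynomial Q) (RatFunc Q) (x i).denom =
      algebraMap (Polynomial Q) (RatFunc Q) (x i).num := by
    nth_rewrite 1 [← RatFunc.num_div_denom (x i)]
    exact div_mul_cancel₀ _ hd0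
  have hxi : x i = algebraMap (Polynomial Q) (RatFunc Q) ((x i).num * c) *
      ((1 : RatFunc Q) / algebraMap (Polynomial Q) (RatFunc Q) D) := by
    rw [hc, map_mul, map_mul, mul_one_div]
    field_simp
    exact hxn
  rw [hxi]
  exact mul_mem (halg _) (Algebra.subset_adjoin hinvD)
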